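/- arXiv:1506.07382 — 3 statements merged into one kernel-verified Lean document; each statement's English description precedes it below -/
import Mathlib

section
/- For α ∈ (0,1], real r, and x > 0, if y(x) = x^{rα}, then x^{2α}·T_α(T_α y)(x) + α·x^{α}·(T_α y)(x) − α²·p²·y(x) = α²·(r² − p²)·x^{rα}. In particular, x^{rα} solves the Euler-type equation x^{2α} T_α T_α y + α x^α T_α y − α² p² y = 0 if and only if r² = p². -/
open Real

noncomputable def confDeriv (α : ℝ) (f : ℝ → ℝ) (x : ℝ) : ℝ :=
  x ^ (1 - α) * deriv f x

lemma confDeriv_rpow (α c : ℝ) {x : ℝ} (hx : 0 < x) :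
    confDeriv α (fun t => t ^ c) x = c * x ^ (c - α) := by
  unfold confDeriv
  rw [Real.deriv_rpow_const x c, mul_left_comm, ← Real.rpow_add hx]
  ring_nf

theorem conformable_euler_equation (α : ℝ) (hα : α ∈ Set.Ioc (0:ℝ) 1)
    (r p : ℝ) (y : ℝ → ℝ) (hy : y = fun t => t ^ (r * α))
    (x : ℝ) (hx : 0 < x) :
    (x ^ (2 * α) * confDeriv α (confDeriv α y) x
        + α * x ^ α * confDeriv α y x - α ^ 2 * p ^ 2 * y x
      = α ^ 2 * (r ^ 2 - p ^ 2) * x ^ (r * α))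
    ∧ ((x ^ (2 * α) * confDeriv α (confDeriv α y) x
        + α * x ^ α * confDeriv α y x - α ^ 2 * p ^ 2 * y x = 0)
      ↔ r ^ 2 = p ^ 2) := by
  have hα0 := hα.1
  have h1 : confDeriv α y x = r * α * x ^ (r * α - α) := by
    rw [hy]; exact confDeriv_rpow α (r * α) hx
  have hev : confDeriv α y =ᶠ[nhds x] fun t => (r * α) * t ^ (r * α - α) := by
    filter_upwards [Ioi_mem_nhds hx] with t ht
    rw [hy]; exact confDeriv_rpow α (r * α) ht
  have h2 : confDeriv α (confDeriv α y) x
      = (r * α) * (r * α - α) * x ^ (r * α - 2 * α) := by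
    rw [confDeriv, hev.deriv_eq,
      (((Real.hasDerivAt_rpow_const (p := r * α - α) (Or.inl hx.ne'))).const_mul
        (r * α)).deriv]
    rw [show x ^ (1 - α) * (r * α * ((r * α - α) * x ^ (r * α - α - 1)))
        = r * α * (r * α - α) * (x ^ (1 - α) * x ^ (r * α - α - 1)) by ring,
      ← Real.rpow_add hx]
    ring_nf
  have key : x ^ (2 * α) * confDeriv α (confDeriv α y) x
        + α * x ^ α * confDeriv α y x - α ^ 2 * p ^ 2 * y x
      = α ^ 2 * (r ^ 2 - p ^ 2) * x ^ (r * α) := by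
    rw [h1, h2, hy]
    have e1 : x ^ (2 * α) * x ^ (r * α - 2 * α) = x ^ (r * α) := by
      rw [← Real.rpow_add hx]; ring_nf
    have e2 : x ^ α * x ^ (r * α - α) = x ^ (r * α) := by
      rw [← Real.rpow_add hx]; ring_nf
    calc x ^ (2 * α) * (r * α * (r * α - α) * x ^ (r * α - 2 * α))
          + α * x ^ α * (r * α * x ^ (r * α - α)) - α ^ 2 * p ^ 2 * x ^ (r * α)
        = r * α * (r * α - α) * (x ^ (2 * α) * x ^ (r * α - 2 * α))
          + α * (r * α) * (x ^ α * x ^ (r * α - α))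
          - α ^ 2 * p ^ 2 * x ^ (r * α) := by ring
      _ = α ^ 2 * (r ^ 2 - p ^ 2) * x ^ (r * α) := by rw [e1, e2]; ring
  refine ⟨key, ?_⟩
  rw [key]
  have hxp : (0:ℝ) < x ^ (r * α) := Real.rpow_pos_of_pos hx _
  constructor
  · intro h
    have := mul_eq_zero.mp h
    rcases this with h' | h'
    · rcases mul_eq_zero.mp h' with h'' | h''
      · exact absurd h'' (by positivity)
      · linarith [sub_eq_zero.mp h'']
    · exact absurd h' hxp.ne'
  · intro h
    rw [h]; ring
end

section
/- For α ∈ (0,1] and x > 0, the function y(x) = Σ_{n=0}^∞ ((−1)^n/(n!)²)·(x^α/2)^{2n} satisfies the conformable fractional Bessel equation of order zero: x^{2α}·T_α(T_α y)(x) + α·x^α·(T_α y)(x) + α²·x^{2α}·y(x) = 0. -/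
open Real

noncomputable def cBess (n : ℕ) : ℝ := (-1 : ℝ) ^ n / ((n.factorial : ℝ)) ^ 2 / 4 ^ n

noncomputable def GB (u : ℝ) : ℝ := ∑' n : ℕ, cBess n * u ^ (2 * n)
noncomputable def GB1 (u : ℝ) : ℝ :=
  ∑' n : ℕ, cBess n * (((2 * n : ℕ) : ℝ) * u ^ (2 * n - 1))
noncomputable def GB2 (u : ℝ) : ℝ :=
  ∑' n : ℕ, cBess n * (((2 * n : ℕ) : ℝ) * (((2 * n - 1 : ℕ) : ℝ) * u ^ (2 * n - 1 - 1)))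

lemma abs_cBess_le (n : ℕ) : |cBess n| ≤ 1 / ((n.factorial : ℝ)) ^ 2 := by
  have h1 : (0:ℝ) < ((n.factorial : ℝ)) ^ 2 := by positivity
  have h4 : (1:ℝ) ≤ (4:ℝ) ^ n := one_le_pow₀ (by norm_num)
  have habs : |cBess n| = 1 / ((n.factorial : ℝ)) ^ 2 / 4 ^ n := by
    rw [cBess, abs_div, abs_div]
    congr 1
    · congr 1
      · rw [abs_pow, abs_neg, abs_one, one_pow]
      · rw [abs_pow, Nat.abs_cast]
    · rw [abs_pow]
      norm_num
  rw [habs, div_div]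
  apply div_le_div₀ (by positivity) le_rfl (by positivity)
  nlinarith

lemma summable_aux (B : ℝ) (hB : 0 ≤ B) :
    Summable (fun n : ℕ => ((n : ℝ) + 1) ^ 2 * B ^ n / ((n.factorial : ℝ)) ^ 2) := by
  apply Summable.of_nonneg_of_le (fun n => by positivity)
    ?_ (Real.summable_pow_div_factorial (4 * B))
  intro n
  have hf1 : (1:ℝ) ≤ (n.factorial : ℝ) := by exact_mod_cast Nat.one_le_iff_ne_zero.mpr n.factorial_pos.ne'
  have h2 : ((n : ℝ) + 1) ≤ 2 ^ n := by exact_mod_cast Nat.lt_two_pow_self (n := n)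
  have h4 : ((n : ℝ) + 1) ^ 2 ≤ 4 ^ n := by
    calc ((n : ℝ) + 1) ^ 2 ≤ ((2:ℝ) ^ n) ^ 2 := by
          apply pow_le_pow_left₀ (by positivity) h2
      _ = 4 ^ n := by rw [← pow_mul, mul_comm n 2, pow_mul]; norm_num
  rw [mul_pow]
  apply div_le_div₀ (by positivity) ?_ (by positivity) ?_
  · exact mul_le_mul_of_nonneg_right h4 (by positivity)
  · nlinarith

noncomputable def bndB (R : ℝ) (n : ℕ) : ℝ :=
  4 * ((n : ℝ) + 1) ^ 2 * (R ^ 2) ^ n / ((n.factorial : ℝ)) ^ 2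

lemma summable_bndB (R : ℝ) : Summable (bndB R) := by
  have := (summable_aux (R ^ 2) (by positivity)).mul_left 4
  apply this.congr
  intro n
  simp [bndB]
  ring

lemma key_bound (R : ℝ) (hR : 1 ≤ R) (y : ℝ) (hy : |y| ≤ R) (n : ℕ) (m : ℝ)
    (hm : |m| ≤ 4 * ((n : ℝ) + 1) ^ 2) (k : ℕ) (hk : k ≤ 2 * n) :
    |cBess n * (m * y ^ k)| ≤ bndB R n := by
  have hR0 : (0:ℝ) ≤ R := le_trans zero_le_one hR
  have h1 : |y ^ k| ≤ R ^ (2 * n) := by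
    rw [abs_pow]
    calc |y| ^ k ≤ R ^ k := pow_le_pow_left₀ (abs_nonneg _) hy k
      _ ≤ R ^ (2 * n) := pow_le_pow_right₀ hR hk
  have h2 : |cBess n * (m * y ^ k)| = |cBess n| * (|m| * |y ^ k|) := by
    rw [abs_mul, abs_mul]
  rw [h2]
  have hfac : (0:ℝ) < ((n.factorial : ℝ)) ^ 2 := by positivity
  calc |cBess n| * (|m| * |y ^ k|)
      ≤ (1 / ((n.factorial : ℝ)) ^ 2) * ((4 * ((n : ℝ) + 1) ^ 2) * R ^ (2 * n)) := by
        apply mul_le_mul (abs_cBess_le n) ?_ (by positivity) (by positivity)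
        exact mul_le_mul hm h1 (abs_nonneg _) (by positivity)
    _ = bndB R n := by rw [bndB, pow_mul]; ring

lemma bnd_G (R : ℝ) (hR : 1 ≤ R) (y : ℝ) (hy : |y| ≤ R) (n : ℕ) :
    |cBess n * y ^ (2 * n)| ≤ bndB R n := by
  have h1 : |(1:ℝ)| ≤ 4 * ((n : ℝ) + 1) ^ 2 := by
    rw [abs_one]
    nlinarith [Nat.cast_nonneg (α := ℝ) n, sq_nonneg ((n:ℝ))]
  have := key_bound R hR y hy n 1 h1 (2 * n) le_rfl
  simpa using this

lemma bnd_G1 (R : ℝ) (hR : 1 ≤ R) (y : ℝ) (hy : |y| ≤ R) (n : ℕ) :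
    |cBess n * (((2 * n : ℕ) : ℝ) * y ^ (2 * n - 1))| ≤ bndB R n := by
  apply key_bound R hR y hy n _ ?_ _ (by omega)
  rw [abs_of_nonneg (by positivity)]
  push_cast
  nlinarith [Nat.cast_nonneg (α := ℝ) n, sq_nonneg ((n:ℝ))]

lemma bnd_G2 (R : ℝ) (hR : 1 ≤ R) (y : ℝ) (hy : |y| ≤ R) (n : ℕ) :
    |cBess n * (((2 * n : ℕ) : ℝ) * (((2 * n - 1 : ℕ) : ℝ) * y ^ (2 * n - 1 - 1)))| ≤ bndB R n := by
  have h : cBess n * (((2 * n : ℕ) : ℝ) * (((2 * n - 1 : ℕ) : ℝ) * y ^ (2 * n - 1 - 1)))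
      = cBess n * ((((2 * n : ℕ) : ℝ) * ((2 * n - 1 : ℕ) : ℝ)) * y ^ (2 * n - 1 - 1)) := by ring
  rw [h]
  apply key_bound R hR y hy n _ ?_ _ (by omega)
  rw [abs_of_nonneg (by positivity)]
  have h1 : ((2 * n : ℕ) : ℝ) = 2 * (n : ℝ) := by push_cast; ring
  have h2 : ((2 * n - 1 : ℕ) : ℝ) ≤ 2 * (n : ℝ) := by
    have : (2 * n - 1 : ℕ) ≤ 2 * n := by omega
    calc ((2 * n - 1 : ℕ) : ℝ) ≤ ((2 * n : ℕ) : ℝ) := by exact_mod_cast this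
      _ = 2 * (n : ℝ) := h1
  have h3 : (0:ℝ) ≤ ((2 * n - 1 : ℕ) : ℝ) := by positivity
  rw [h1]
  nlinarith [Nat.cast_nonneg (α := ℝ) n]

lemma summable_G (v : ℝ) : Summable (fun n => cBess n * v ^ (2 * n)) := by
  apply Summable.of_norm
  apply Summable.of_nonneg_of_le (fun n => norm_nonneg _)
    (fun n => bnd_G (|v| + 1) (by linarith [abs_nonneg v]) v (by linarith) n)
    (summable_bndB _)

lemma GB_hasDerivAt (u : ℝ) : HasDerivAt GB (GB1 u) u := by
  set R := |u| + 1 with hRdef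
  have hR : 1 ≤ R := by have := abs_nonneg u; linarith
  have hmem : u ∈ Metric.ball (0:ℝ) R := by
    simp only [Metric.mem_ball, Real.dist_eq, sub_zero]
    linarith
  unfold GB GB1
  apply hasDerivAt_tsum_of_isPreconnected (summable_bndB R) Metric.isOpen_ball
    (convex_ball (0:ℝ) R).isPreconnected
    (g' := fun n y => cBess n * (((2 * n : ℕ) : ℝ) * y ^ (2 * n - 1)))
    (fun n y _ => (hasDerivAt_pow (2 * n) y).const_mul (cBess n))
    (fun n y hy => ?_) hmem (summable_G u) hmem
  have hyR : |y| ≤ R := by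
    simp only [Metric.mem_ball, Real.dist_eq, sub_zero] at hy
    linarith
  rw [Real.norm_eq_abs]
  exact bnd_G1 R hR y hyR n

lemma summable_G1 (v : ℝ) : Summable (fun n => cBess n * (((2 * n : ℕ) : ℝ) * v ^ (2 * n - 1))) := by
  apply Summable.of_norm
  apply Summable.of_nonneg_of_le (fun n => norm_nonneg _)
    (fun n => bnd_G1 (|v| + 1) (by linarith [abs_nonneg v]) v (by linarith) n)
    (summable_bndB _)

lemma GB1_hasDerivAt (u : ℝ) : HasDerivAt GB1 (GB2 u) u := by
  set R := |u| + 1 with hRdef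
  have hR : 1 ≤ R := by have := abs_nonneg u; linarith
  have hmem : u ∈ Metric.ball (0:ℝ) R := by
    simp only [Metric.mem_ball, Real.dist_eq, sub_zero]
    linarith
  unfold GB1 GB2
  apply hasDerivAt_tsum_of_isPreconnected (summable_bndB R) Metric.isOpen_ball
    (convex_ball (0:ℝ) R).isPreconnected
    (g' := fun n y => cBess n * (((2 * n : ℕ) : ℝ) * (((2 * n - 1 : ℕ) : ℝ) * y ^ (2 * n - 1 - 1))))
    (fun n y _ => ((hasDerivAt_pow (2 * n - 1) y).const_mul ((2 * n : ℕ) : ℝ)).const_mul (cBess n))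
    (fun n y hy => ?_) hmem (summable_G1 u) hmem
  have hyR : |y| ≤ R := by
    simp only [Metric.mem_ball, Real.dist_eq, sub_zero] at hy
    linarith
  rw [Real.norm_eq_abs]
  exact bnd_G2 R hR y hyR n

lemma summable_G2 (v : ℝ) :
    Summable (fun n => cBess n * (((2 * n : ℕ) : ℝ) * (((2 * n - 1 : ℕ) : ℝ) * v ^ (2 * n - 1 - 1)))) := by
  apply Summable.of_norm
  apply Summable.of_nonneg_of_le (fun n => norm_nonneg _)
    (fun n => bnd_G2 (|v| + 1) (by linarith [abs_nonneg v]) v (by linarith) n)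
    (summable_bndB _)

lemma cBess_rec (n : ℕ) : cBess (n + 1) * (2 * ((n : ℝ) + 1)) ^ 2 = -cBess n := by
  have hf : ((n.factorial : ℝ)) ≠ 0 := by positivity
  have h4 : ((4:ℝ)) ^ n ≠ 0 := by positivity
  simp only [cBess, pow_succ, Nat.factorial_succ]
  push_cast
  field_simp
  ring

lemma bessel_identity (u : ℝ) : u ^ 2 * GB2 u + u * GB1 u + u ^ 2 * GB u = 0 := by
  have h2 : HasSum (fun n => cBess n * (((2 * n : ℕ) : ℝ) * (((2 * n - 1 : ℕ) : ℝ) * u ^ (2 * n - 1 - 1))) * u ^ 2)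
      (GB2 u * u ^ 2) := (summable_G2 u).hasSum.mul_right _
  have h1 : HasSum (fun n => cBess n * (((2 * n : ℕ) : ℝ) * u ^ (2 * n - 1)) * u)
      (GB1 u * u) := (summable_G1 u).hasSum.mul_right _
  have h0 : HasSum (fun n => cBess n * u ^ (2 * n) * u ^ 2)
      (GB u * u ^ 2) := (summable_G u).hasSum.mul_right _
  have hsum : HasSum (fun n => cBess n * (((2 * n : ℕ) : ℝ) * (((2 * n - 1 : ℕ) : ℝ) * u ^ (2 * n - 1 - 1))) * u ^ 2
      + cBess n * (((2 * n : ℕ) : ℝ) * u ^ (2 * n - 1)) * u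
      + cBess n * u ^ (2 * n) * u ^ 2)
      (GB2 u * u ^ 2 + GB1 u * u + GB u * u ^ 2) := (h2.add h1).add h0
  -- rewrite summand as A n + B n
  have hfun : (fun n => cBess n * (((2 * n : ℕ) : ℝ) * (((2 * n - 1 : ℕ) : ℝ) * u ^ (2 * n - 1 - 1))) * u ^ 2
      + cBess n * (((2 * n : ℕ) : ℝ) * u ^ (2 * n - 1)) * u
      + cBess n * u ^ (2 * n) * u ^ 2)
      = fun n => (cBess n * (2 * ((n : ℝ))) ^ 2 * u ^ (2 * n) + cBess n * u ^ (2 * n + 2)) := by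
    funext n
    cases n with
    | zero => norm_num
    | succ m =>
      have e1 : 2 * (m + 1) - 1 - 1 = 2 * m := by omega
      have e2 : 2 * (m + 1) - 1 = 2 * m + 1 := by omega
      have e3 : 2 * (m + 1) = 2 * m + 2 := by omega
      rw [e1, e2, e3]
      push_cast
      ring
  rw [hfun] at hsum
  -- the B series
  have hB : HasSum (fun n => cBess n * u ^ (2 * n + 2)) (∑' n, cBess n * u ^ (2 * n + 2)) := by
    apply Summable.hasSum
    apply ((summable_G u).mul_right (u ^ 2)).congr
    intro n
    rw [pow_add]
    ring
  set SB := ∑' n, cBess n * u ^ (2 * n + 2) with hSB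
  -- the A series sums to -SB
  have hA : HasSum (fun n => cBess n * (2 * ((n : ℝ))) ^ 2 * u ^ (2 * n)) (-SB) := by
    have hneg : HasSum (fun n => -(cBess n * u ^ (2 * n + 2))) (-SB) := hB.neg
    have hfun2 : (fun n : ℕ => cBess (n + 1) * (2 * (((n + 1 : ℕ) : ℝ))) ^ 2 * u ^ (2 * (n + 1)))
        = fun n => -(cBess n * u ^ (2 * n + 2)) := by
      funext n
      have hrec := cBess_rec n
      rw [show 2 * (n + 1) = 2 * n + 2 by ring]
      push_cast
      linear_combination u ^ (2 * n + 2) * hrec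
    have hshift : HasSum (fun n : ℕ => cBess (n + 1) * (2 * (((n + 1 : ℕ) : ℝ))) ^ 2 * u ^ (2 * (n + 1))) (-SB) := by
      rw [hfun2]; exact hneg
    have h := (hasSum_nat_add_iff (f := fun n : ℕ => cBess n * (2 * ((n : ℝ))) ^ 2 * u ^ (2 * n)) 1).mp hshift
    have h0 : (-SB + ∑ i ∈ Finset.range 1, cBess i * (2 * ((i : ℝ))) ^ 2 * u ^ (2 * i)) = -SB := by
      simp
    rw [h0] at h
    exact h
  have := hsum.unique (hA.add hB)
  linarith [this]

theorem conformable_bessel_order_zero (α : ℝ) (hα : α ∈ Set.Ioc (0:ℝ) 1)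
    (y : ℝ → ℝ)
    (hy : y = fun t => ∑' n : ℕ,
        ((-1 : ℝ) ^ n / ((n.factorial : ℝ)) ^ 2) * (t ^ α / 2) ^ (2 * n))
    (x : ℝ) (hx : 0 < x) :
    x ^ (2 * α) * confDeriv α (confDeriv α y) x
      + α * x ^ α * confDeriv α y x + α ^ 2 * x ^ (2 * α) * y x = 0 := by
  obtain ⟨hα0, hα1⟩ := hα
  -- y = GB ∘ (·^α)
  have hyG : y = fun t => GB (t ^ α) := by
    rw [hy]
    funext t
    unfold GB
    congr 1
    funext n
    rw [cBess, div_pow, show ((2:ℝ)) ^ (2 * n) = 4 ^ n by rw [pow_mul]; norm_num]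
    ring
  have hrpow : ∀ z : ℝ, 0 < z → HasDerivAt (fun t : ℝ => t ^ α) (α * z ^ (α - 1)) z := by
    intro z hz
    exact Real.hasDerivAt_rpow_const (Or.inl hz.ne')
  -- first conformable derivative
  have hy' : ∀ z : ℝ, 0 < z → HasDerivAt y (GB1 (z ^ α) * (α * z ^ (α - 1))) z := by
    intro z hz
    rw [hyG]
    exact (GB_hasDerivAt (z ^ α)).comp z (hrpow z hz)
  have hcanc : ∀ z : ℝ, 0 < z → z ^ (1 - α) * z ^ (α - 1) = 1 := by
    intro z hz
    rw [← Real.rpow_add hz, show (1 - α) + (α - 1) = 0 by ring, Real.rpow_zero]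
  have key1 : ∀ z : ℝ, 0 < z → confDeriv α y z = α * GB1 (z ^ α) := by
    intro z hz
    unfold confDeriv
    rw [(hy' z hz).deriv]
    have h := hcanc z hz
    linear_combination (α * GB1 (z ^ α)) * h
  -- second conformable derivative
  have heq : confDeriv α y =ᶠ[nhds x] fun z => α * GB1 (z ^ α) := by
    filter_upwards [Ioi_mem_nhds hx] with z hz
    exact key1 z hz
  have hd2 : HasDerivAt (fun z => α * GB1 (z ^ α)) (α * (GB2 (x ^ α) * (α * x ^ (α - 1)))) x :=
    by have := ((GB1_hasDerivAt (x ^ α)).comp x (hrpow x hx)).const_mul α; exact this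
  have hderiv2 : deriv (confDeriv α y) x = α * (GB2 (x ^ α) * (α * x ^ (α - 1))) := by
    rw [heq.deriv_eq, hd2.deriv]
  have key2 : confDeriv α (confDeriv α y) x = α ^ 2 * GB2 (x ^ α) := by
    rw [show confDeriv α (confDeriv α y) x = x ^ (1 - α) * deriv (confDeriv α y) x from rfl,
      hderiv2]
    have h := hcanc x hx
    linear_combination (α ^ 2 * GB2 (x ^ α)) * h
  have hx2 : x ^ (2 * α) = (x ^ α) ^ 2 := by
    rw [show (2 * α) = α * ((2 : ℕ) : ℝ) by push_cast; ring, Real.rpow_mul hx.le,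
      Real.rpow_natCast]
  rw [key2, key1 x hx, hx2, hyG]
  have hb := bessel_identity (x ^ α)
  linear_combination α ^ 2 * hb
end

section
/- Let α ∈ (0,1] and p ≥ 0 real. For x > 0 define (J_α)_p(x) = Σ_{n=0}^∞ ((−1)^n/(n!·Γ(p+n+1)))·(x^α/2)^{2n+p}. Then (J_α)_p satisfies the conformable fractional Bessel equation x^{2α}·T_α(T_α y)(x) + α·x^α·(T_α y)(x) + α²·(x^{2α} − p²)·y(x) = 0. -/
open Real

private noncomputable def aCoef (p : ℝ) (n : ℕ) : ℝ :=
  (-1 : ℝ) ^ n / ((n.factorial : ℝ) * Real.Gamma (p + n + 1))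

private lemma gamma_lb (p : ℝ) (hp : 0 ≤ p) :
    ∀ n : ℕ, (n.factorial : ℝ) * Real.Gamma (p + 1) ≤ Real.Gamma (p + n + 1) := by
  intro n
  induction n with
  | zero => simp
  | succ n ih =>
    have hpos : (0:ℝ) < p + n + 1 := by positivity
    have h1 : Real.Gamma (p + (n + 1 : ℕ) + 1) = (p + n + 1) * Real.Gamma (p + n + 1) := by
      push_cast
      rw [show p + ((n : ℝ) + 1) + 1 = (p + n + 1) + 1 by ring, Real.Gamma_add_one hpos.ne']
    have h2 : ((n + 1 : ℕ).factorial : ℝ) = ((n : ℝ) + 1) * (n.factorial : ℝ) := by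
      push_cast [Nat.factorial_succ]; ring
    rw [h1, h2]
    have hg : 0 < Real.Gamma (p + n + 1) := Real.Gamma_pos_of_pos hpos
    have hf : (0:ℝ) < n.factorial := by exact_mod_cast n.factorial_pos
    have hΓ1 : 0 < Real.Gamma (p + 1) := Real.Gamma_pos_of_pos (by linarith)
    nlinarith [ih, hg, hf, hΓ1]

private lemma aCoef_bound (p : ℝ) (hp : 0 ≤ p) (n : ℕ) :
    |aCoef p n| ≤ (Real.Gamma (p + 1))⁻¹ * 1 ^ n / n.factorial := by
  have hpos : (0:ℝ) < p + n + 1 := by positivity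
  have hg : 0 < Real.Gamma (p + n + 1) := Real.Gamma_pos_of_pos hpos
  have hf : (0:ℝ) < n.factorial := by exact_mod_cast n.factorial_pos
  have hf1 : (1:ℝ) ≤ n.factorial := by exact_mod_cast n.factorial_pos
  have hΓ1 : 0 < Real.Gamma (p + 1) := Real.Gamma_pos_of_pos (by linarith)
  have hlb := gamma_lb p hp n
  have habs : |aCoef p n| = ((n.factorial : ℝ) * Real.Gamma (p + n + 1))⁻¹ := by
    rw [aCoef, abs_div, abs_pow, abs_neg, abs_one, one_pow, one_div,
      abs_of_pos (by positivity)]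
  rw [habs, one_pow, mul_one]
  have h3 : (n.factorial:ℝ) * Real.Gamma (p+1) ≤ (n.factorial:ℝ) * Real.Gamma (p + n + 1) := by
    nlinarith
  calc ((n.factorial : ℝ) * Real.Gamma (p + n + 1))⁻¹
      ≤ ((n.factorial:ℝ) * Real.Gamma (p+1))⁻¹ := by
        apply inv_anti₀ (by positivity) h3
    _ = (Real.Gamma (p+1))⁻¹ / n.factorial := by rw [mul_inv]; ring

private lemma aCoef_rec (p : ℝ) (hp : 0 ≤ p) (n : ℕ) :
    aCoef p (n + 1) * (((n : ℝ) + 1) * ((n : ℝ) + 1 + p)) = -aCoef p n := by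
  have hpos : (0:ℝ) < p + n + 1 := by positivity
  have hg : Real.Gamma (p + n + 1) ≠ 0 := (Real.Gamma_pos_of_pos hpos).ne'
  have h1 : Real.Gamma (p + (n + 1 : ℕ) + 1) = (p + n + 1) * Real.Gamma (p + n + 1) := by
    push_cast
    rw [show p + ((n : ℝ) + 1) + 1 = (p + n + 1) + 1 by ring, Real.Gamma_add_one hpos.ne']
  have h2 : ((n + 1 : ℕ).factorial : ℝ) = ((n : ℝ) + 1) * (n.factorial : ℝ) := by
    push_cast [Nat.factorial_succ]; ring
  have hf : (n.factorial : ℝ) ≠ 0 := by positivity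
  have hn1 : ((n : ℝ) + 1) ≠ 0 := by positivity
  rw [aCoef, aCoef, h1, h2, pow_succ]
  field_simp
  ring

private lemma rpow_term_bound {lo hi K b : ℝ} (hlo : 0 < lo) (hb1 : lo ≤ b) (hb2 : b ≤ hi)
    (hKhi : hi ≤ K) (hKlo : lo⁻¹ ≤ K) (hK : 1 ≤ K) {e m : ℝ} (hm : |e| ≤ m) :
    b ^ e ≤ K ^ m := by
  have hb : 0 < b := hlo.trans_le hb1
  have h2 : K ^ |e| ≤ K ^ m := Real.rpow_le_rpow_of_exponent_le hK hm
  refine le_trans ?_ h2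
  rcases le_or_gt 0 e with he | he
  · rw [abs_of_nonneg he]
    calc b ^ e ≤ hi ^ e := Real.rpow_le_rpow hb.le hb2 he
      _ ≤ K ^ e := Real.rpow_le_rpow (hlo.trans_le (hb1.trans hb2)).le hKhi he
  · rw [abs_of_neg he]
    have hkey : b ^ e = (b⁻¹) ^ (-e) := by
      rw [Real.inv_rpow hb.le, Real.rpow_neg hb.le, inv_inv]
    rw [hkey]
    have hbinv : b⁻¹ ≤ K := le_trans (inv_anti₀ hlo hb1) hKlo
    exact Real.rpow_le_rpow (inv_nonneg.2 hb.le) hbinv (neg_nonneg.2 he.le)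

private lemma lin_le_pow (q : ℝ) (n : ℕ) : |2 * (n : ℝ) + q| ≤ (2 + |q|) * 2 ^ n := by
  have h2 : (n : ℝ) ≤ 2 ^ n := by exact_mod_cast (Nat.lt_two_pow_self (n := n)).le
  have h1 : (1 : ℝ) ≤ 2 ^ n := by exact_mod_cast Nat.one_le_two_pow
  calc |2 * (n : ℝ) + q| ≤ |2 * (n : ℝ)| + |q| := abs_add_le _ _
    _ = 2 * (n : ℝ) + |q| := by rw [abs_of_nonneg (by positivity)]
    _ ≤ (2 + |q|) * 2 ^ n := by nlinarith [abs_nonneg q]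

private lemma summable_of_bound {f : ℕ → ℝ} (A r : ℝ)
    (h : ∀ n, |f n| ≤ A * (r ^ n / n.factorial)) : Summable f := by
  refine Summable.of_abs (Summable.of_nonneg_of_le (fun n => abs_nonneg _) h ?_)
  exact (Real.summable_pow_div_factorial r).mul_left A

private lemma summable_coef_rpow {c : ℕ → ℝ} {C D : ℝ} (hD : 0 ≤ D)
    (hc : ∀ n, |c n| ≤ C * D ^ n / n.factorial) {b : ℝ} (hb : 0 < b) (s : ℝ) :
    Summable (fun n : ℕ => c n * b ^ (2 * (n : ℝ) + s)) := by
  set K : ℝ := max (max b b⁻¹) 1 with hKdef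
  have hK1 : (1:ℝ) ≤ K := le_max_right _ _
  have hK0 : (0:ℝ) < K := lt_of_lt_of_le one_pos hK1
  have hKb : b ≤ K := le_trans (le_max_left _ _) (le_max_left _ _)
  have hKbi : b⁻¹ ≤ K := le_trans (le_max_right _ _) (le_max_left _ _)
  have hC : 0 ≤ C := by
    have h0 := (abs_nonneg (c 0)).trans (hc 0)
    simpa using h0
  apply summable_of_bound (C * K ^ |s|) (D * (K * K))
  intro n
  have hbe : b ^ (2 * (n : ℝ) + s) ≤ K ^ |s| * (K * K) ^ n := by
    have h1 : b ^ (2 * (n : ℝ) + s) ≤ K ^ (2 * (n : ℝ) + |s|) := by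
      refine rpow_term_bound hb le_rfl le_rfl hKb hKbi hK1 ?_
      calc |2 * (n : ℝ) + s| ≤ |2 * (n : ℝ)| + |s| := abs_add_le _ _
        _ = 2 * (n : ℝ) + |s| := by rw [abs_of_nonneg (by positivity)]
    have h2 : K ^ (2 * (n : ℝ) + |s|) = K ^ |s| * (K * K) ^ n := by
      rw [Real.rpow_add hK0, mul_comm (K ^ (2 * (n:ℝ)))]
      congr 1
      rw [show (2 * (n:ℝ)) = ((2 * n : ℕ) : ℝ) by push_cast; ring, Real.rpow_natCast,
        pow_mul, sq]
    rw [h2] at h1; exact h1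
  have hrn : (0:ℝ) ≤ b ^ (2 * (n : ℝ) + s) := Real.rpow_nonneg hb.le _
  calc |c n * b ^ (2 * (n : ℝ) + s)| = |c n| * b ^ (2 * (n : ℝ) + s) := by
        rw [abs_mul, abs_of_nonneg hrn]
    _ ≤ (C * D ^ n / n.factorial) * (K ^ |s| * (K * K) ^ n) := by
        apply mul_le_mul (hc n) hbe hrn
        have : (0:ℝ) < n.factorial := by exact_mod_cast n.factorial_pos
        positivity
    _ = (C * K ^ |s|) * ((D * (K * K)) ^ n / n.factorial) := by
        rw [mul_pow]; ring

private lemma key_deriv {α : ℝ} (hα : 0 < α) (hα1 : α ≤ 1) (s : ℝ) {C D : ℝ} (hD : 0 ≤ D)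
    (c : ℕ → ℝ) (hc : ∀ n, |c n| ≤ C * D ^ n / n.factorial) {x : ℝ} (hx : 0 < x) :
    HasDerivAt (fun y => ∑' n : ℕ, c n * (y ^ α / 2) ^ (2 * (n : ℝ) + s))
      (∑' n : ℕ, c n * ((2 * (n : ℝ) + s) * (x ^ α / 2) ^ (2 * (n : ℝ) + s - 1)
        * (α * x ^ (α - 1) / 2))) x := by
  have hC : 0 ≤ C := by
    have h0 := (abs_nonneg (c 0)).trans (hc 0)
    simpa using h0
  set t : Set ℝ := Set.Ioo (x / 2) (x + x) with ht
  have hmemt : ∀ y ∈ t, 0 < y := fun y hy => lt_trans (by linarith : (0:ℝ) < x/2) hy.1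
  set lo : ℝ := (x / 2) ^ α / 2 with hlo_def
  set hi : ℝ := (x + x) ^ α / 2 with hhi_def
  have hlo : 0 < lo := by rw [hlo_def]; positivity
  set K : ℝ := max (max hi lo⁻¹) 1 with hK_def
  have hK1 : (1:ℝ) ≤ K := le_max_right _ _
  have hK0 : (0:ℝ) < K := lt_of_lt_of_le one_pos hK1
  have hKhi : hi ≤ K := le_trans (le_max_left _ _) (le_max_left _ _)
  have hKlo : lo⁻¹ ≤ K := le_trans (le_max_right _ _) (le_max_left _ _)
  set Ky : ℝ := max (max (x + x) (x / 2)⁻¹) 1 with hKy_def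
  have hKy1 : (1:ℝ) ≤ Ky := le_max_right _ _
  have hKy0 : (0:ℝ) < Ky := lt_of_lt_of_le one_pos hKy1
  -- bounds for y ∈ t
  have hyb : ∀ y ∈ t, lo ≤ y ^ α / 2 ∧ y ^ α / 2 ≤ hi := by
    intro y hy
    obtain ⟨hy1, hy2⟩ := hy
    constructor
    · rw [hlo_def]
      gcongr <;> linarith
    · rw [hhi_def]
      gcongr <;> linarith
  have hyK : ∀ y ∈ t, y ^ (α - 1) ≤ Ky := by
    intro y hy
    have h := rpow_term_bound (b := y) (lo := x/2) (hi := x + x) (by linarith) hy.1.le hy.2.le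
      (le_trans (le_max_left _ _) (le_max_left _ _))
      (le_trans (le_max_right _ _) (le_max_left _ _)) hKy1
      (e := α - 1) (m := 1) (by rw [abs_of_nonpos (by linarith)]; linarith)
    rw [Real.rpow_one] at h
    exact h
  -- the series of derivatives
  set g' : ℕ → ℝ → ℝ := fun n y => c n * ((2 * (n : ℝ) + s) * (y ^ α / 2) ^ (2 * (n : ℝ) + s - 1)
    * (α * y ^ (α - 1) / 2)) with hg'_def
  set u : ℕ → ℝ := fun n => (C * (2 + |s|) * K ^ (|s| + 1) * (α * Ky / 2)) *
    ((2 * (D * (K * K))) ^ n / n.factorial) with hu_def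
  have hu : Summable u := (Real.summable_pow_div_factorial _).mul_left _
  have hg : ∀ (n : ℕ) (y : ℝ), y ∈ t → HasDerivAt
      (fun y => c n * (y ^ α / 2) ^ (2 * (n : ℝ) + s)) (g' n y) y := by
    intro n y hy
    have hy0 := hmemt y hy
    have hb0 : 0 < y ^ α / 2 := by positivity
    have h1 : HasDerivAt (fun y : ℝ => y ^ α / 2) (α * y ^ (α - 1) / 2) y := by
      simpa [mul_comm] using (Real.hasDerivAt_rpow_const (p := α) (Or.inl hy0.ne')).div_const 2
    have h2 : HasDerivAt (fun u : ℝ => u ^ (2 * (n : ℝ) + s))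
        ((2 * (n : ℝ) + s) * (y ^ α / 2) ^ (2 * (n : ℝ) + s - 1)) (y ^ α / 2) :=
      Real.hasDerivAt_rpow_const (Or.inl hb0.ne')
    have h3 := h2.comp y h1
    have h4 := h3.const_mul (c n)
    simpa [hg'_def, Function.comp, mul_assoc] using h4
  have hg' : ∀ (n : ℕ) (y : ℝ), y ∈ t → ‖g' n y‖ ≤ u n := by
    intro n y hy
    obtain ⟨hb1, hb2⟩ := hyb y hy
    have hy0 := hmemt y hy
    have hb0 : 0 < y ^ α / 2 := by positivity
    have hrn : (0:ℝ) ≤ (y ^ α / 2) ^ (2 * (n : ℝ) + s - 1) := Real.rpow_nonneg hb0.le _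
    have hfac : (0:ℝ) < n.factorial := by exact_mod_cast n.factorial_pos
    have hB : (y ^ α / 2) ^ (2 * (n : ℝ) + s - 1) ≤ K ^ (|s| + 1) * (K * K) ^ n := by
      have h1 : (y ^ α / 2) ^ (2 * (n : ℝ) + s - 1) ≤ K ^ (2 * (n : ℝ) + (|s| + 1)) := by
        refine rpow_term_bound hlo hb1 hb2 hKhi hKlo hK1 ?_
        calc |2 * (n : ℝ) + s - 1| ≤ |2 * (n : ℝ)| + |s - 1| := by
              rw [show 2 * (n:ℝ) + s - 1 = 2 * (n:ℝ) + (s - 1) by ring]; exact abs_add_le _ _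
          _ ≤ 2 * (n : ℝ) + (|s| + 1) := by
              rw [abs_of_nonneg (by positivity : (0:ℝ) ≤ 2 * (n:ℝ))]
              have h := abs_sub s 1
              rw [abs_one] at h
              linarith
      have h2 : K ^ (2 * (n : ℝ) + (|s| + 1)) = K ^ (|s| + 1) * (K * K) ^ n := by
        rw [Real.rpow_add hK0, mul_comm (K ^ (2 * (n:ℝ)))]
        congr 1
        rw [show (2 * (n:ℝ)) = ((2 * n : ℕ) : ℝ) by push_cast; ring, Real.rpow_natCast,
          pow_mul, sq]
      rw [h2] at h1; exact h1
    have hA : α * y ^ (α - 1) / 2 ≤ α * Ky / 2 := by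
      have := hyK y hy
      have hr : (0:ℝ) ≤ y ^ (α - 1) := Real.rpow_nonneg hy0.le _
      nlinarith
    have hA0 : (0:ℝ) ≤ α * y ^ (α - 1) / 2 := by
      have hr : (0:ℝ) ≤ y ^ (α - 1) := Real.rpow_nonneg hy0.le _
      positivity
    have hE : |2 * (n : ℝ) + s| ≤ (2 + |s|) * 2 ^ n := lin_le_pow s n
    calc ‖g' n y‖ = |c n| * (|2 * (n : ℝ) + s| * (y ^ α / 2) ^ (2 * (n : ℝ) + s - 1)
          * (α * y ^ (α - 1) / 2)) := by
          rw [hg'_def, Real.norm_eq_abs, abs_mul, abs_mul, abs_mul,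
            abs_of_nonneg hrn, abs_of_nonneg hA0]
      _ ≤ (C * D ^ n / n.factorial) * (((2 + |s|) * 2 ^ n) * (K ^ (|s| + 1) * (K * K) ^ n)
          * (α * Ky / 2)) := by
          have hcn0 : (0:ℝ) ≤ C * D ^ n / n.factorial :=
            div_nonneg (mul_nonneg hC (pow_nonneg hD n)) hfac.le
          refine mul_le_mul (hc n) ?_ ?_ hcn0
          · exact mul_le_mul (mul_le_mul hE hB hrn (by positivity)) hA hA0
              (by positivity)
          · have h1 : (0:ℝ) ≤ |2 * (n : ℝ) + s| := abs_nonneg _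
            positivity
      _ = u n := by simp only [hu_def]; ring
  have hx_mem : x ∈ t := by constructor <;> simp <;> linarith
  have hg0 : Summable (fun n => c n * (x ^ α / 2) ^ (2 * (n : ℝ) + s)) :=
    summable_coef_rpow hD hc (by positivity) s
  exact hasDerivAt_tsum_of_isPreconnected hu isOpen_Ioo isPreconnected_Ioo
    hg hg' hx_mem hg0 hx_mem

private lemma prod_bound2 {x1 x2 X1 X2 : ℝ} (h1 : |x1| ≤ X1) (h2 : |x2| ≤ X2) :
    |x1 * x2| ≤ X1 * X2 := by
  rw [abs_mul]
  exact mul_le_mul h1 h2 (abs_nonneg _) (le_trans (abs_nonneg _) h1)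

noncomputable def confBesselJ (α p : ℝ) (x : ℝ) : ℝ :=
  ∑' n : ℕ, ((-1 : ℝ) ^ n / ((n.factorial : ℝ) * Real.Gamma (p + n + 1)))
    * (x ^ α / 2) ^ (2 * (n : ℝ) + p)

theorem conformable_bessel_order_p (α : ℝ) (hα : α ∈ Set.Ioc (0:ℝ) 1)
    (p : ℝ) (hp : 0 ≤ p) (x : ℝ) (hx : 0 < x) :
    x ^ (2 * α) * confDeriv α (confDeriv α (confBesselJ α p)) x
      + α * x ^ α * confDeriv α (confBesselJ α p) x
      + α ^ 2 * (x ^ (2 * α) - p ^ 2) * confBesselJ α p x = 0 := by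
  obtain ⟨hα0, hα1⟩ := hα
  set a : ℕ → ℝ := aCoef p with ha_def
  set A : ℝ := (Real.Gamma (p + 1))⁻¹ with hA_def
  have hΓ : 0 < Real.Gamma (p + 1) := Real.Gamma_pos_of_pos (by linarith)
  have hA : 0 ≤ A := inv_nonneg.2 hΓ.le
  have ha : ∀ n, |a n| ≤ A * 1 ^ n / n.factorial := fun n => aCoef_bound p hp n
  have ha' : ∀ n, |a n| ≤ A / n.factorial := by
    intro n; have := ha n; rwa [one_pow, mul_one] at this
  have hb : (0:ℝ) < x ^ α / 2 := by positivity
  have hα2 : |α ^ 2| ≤ 1 := by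
    rw [abs_of_nonneg (sq_nonneg α)]; nlinarith
  -- first derivative
  have hJ : ∀ y : ℝ, 0 < y → HasDerivAt (confBesselJ α p)
      (∑' n : ℕ, a n * ((2 * (n:ℝ) + p) * (y ^ α / 2) ^ (2 * (n:ℝ) + p - 1)
        * (α * y ^ (α - 1) / 2))) y := by
    intro y hy
    exact key_deriv hα0 hα1 p (by norm_num : (0:ℝ) ≤ 1) a ha hy
  set c2 : ℕ → ℝ := fun n => a n * (2 * (n:ℝ) + p) * (α / 2) with hc2_def
  have hc2 : ∀ n, |c2 n| ≤ (A * (2 + |p|)) * 2 ^ n / n.factorial := by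
    intro n
    have h3 : |α / 2| ≤ 1 := by rw [abs_of_nonneg (by linarith)]; linarith
    calc |c2 n| = |a n * (2 * (n:ℝ) + p) * (α / 2)| := by rw [hc2_def]
      _ ≤ (A / n.factorial) * ((2 + |p|) * 2 ^ n) * 1 :=
          prod_bound2 (prod_bound2 (ha' n) (lin_le_pow p n)) h3
      _ = (A * (2 + |p|)) * 2 ^ n / n.factorial := by ring
  have hTJ : ∀ y : ℝ, 0 < y → confDeriv α (confBesselJ α p) y
      = ∑' n : ℕ, c2 n * (y ^ α / 2) ^ (2 * (n:ℝ) + (p - 1)) := by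
    intro y hy
    simp only [confDeriv]
    rw [(hJ y hy).deriv, ← tsum_mul_left]
    refine tsum_congr fun n => ?_
    have hxx : y ^ (1 - α) * y ^ (α - 1) = 1 := by
      rw [← Real.rpow_add hy]; norm_num
    have he : (y ^ α / 2) ^ (2 * (n:ℝ) + (p - 1)) = (y ^ α / 2) ^ (2 * (n:ℝ) + p - 1) := by
      congr 1; ring
    simp only [hc2_def]
    rw [he]
    linear_combination (a n * ((2 * (n:ℝ) + p) * (y ^ α / 2) ^ (2 * (n:ℝ) + p - 1)
      * (α / 2))) * hxx
  -- second derivative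
  have h2d : HasDerivAt (fun y => ∑' n : ℕ, c2 n * (y ^ α / 2) ^ (2 * (n:ℝ) + (p - 1)))
      (∑' n : ℕ, c2 n * ((2 * (n:ℝ) + (p - 1)) * (x ^ α / 2) ^ (2 * (n:ℝ) + (p - 1) - 1)
        * (α * x ^ (α - 1) / 2))) x :=
    key_deriv hα0 hα1 (p - 1) (by norm_num : (0:ℝ) ≤ 2) c2 hc2 hx
  have hdd : deriv (confDeriv α (confBesselJ α p)) x
      = ∑' n : ℕ, c2 n * ((2 * (n:ℝ) + (p - 1)) * (x ^ α / 2) ^ (2 * (n:ℝ) + (p - 1) - 1)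
        * (α * x ^ (α - 1) / 2)) := by
    have hev : confDeriv α (confBesselJ α p) =ᶠ[nhds x]
        (fun y => ∑' n : ℕ, c2 n * (y ^ α / 2) ^ (2 * (n:ℝ) + (p - 1))) := by
      filter_upwards [Ioi_mem_nhds hx] with y hy using hTJ y hy
    rw [hev.deriv_eq, h2d.deriv]
  have h1g : confDeriv α (confDeriv α (confBesselJ α p)) x
      = x ^ (1 - α) * ∑' n : ℕ, c2 n * ((2 * (n:ℝ) + (p - 1))
        * (x ^ α / 2) ^ (2 * (n:ℝ) + (p - 1) - 1) * (α * x ^ (α - 1) / 2)) := by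
    simp only [confDeriv]; rw [hdd]
  have hJx : confBesselJ α p x = ∑' n : ℕ, a n * (x ^ α / 2) ^ (2 * (n:ℝ) + p) := rfl
  rw [h1g, hTJ x hx, hJx]
  -- facts for per-term algebra
  have hxx : x ^ (1 - α) * x ^ (α - 1) = 1 := by rw [← Real.rpow_add hx]; norm_num
  have hx2 : x ^ (2 * α) = x ^ α * x ^ α := by
    rw [show 2 * α = α + α by ring, Real.rpow_add hx]
  -- the three tsum identities
  have hT1 : x ^ (2 * α) * (x ^ (1 - α) * ∑' n : ℕ, c2 n * ((2 * (n:ℝ) + (p - 1))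
        * (x ^ α / 2) ^ (2 * (n:ℝ) + (p - 1) - 1) * (α * x ^ (α - 1) / 2)))
      = ∑' n : ℕ, (α ^ 2 * (a n * ((2 * (n:ℝ) + p) * (2 * (n:ℝ) + p - 1))))
        * (x ^ α / 2) ^ (2 * (n:ℝ) + p) := by
    rw [← tsum_mul_left, ← tsum_mul_left]
    refine tsum_congr fun n => ?_
    simp only [hc2_def]
    have hsplit : (x ^ α / 2) ^ (2 * (n:ℝ) + p)
        = (x ^ α / 2) ^ (2 * (n:ℝ) + (p - 1) - 1) * (x ^ α / 2) * (x ^ α / 2) := by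
      rw [show 2 * (n:ℝ) + p = (2 * (n:ℝ) + (p - 1) - 1) + 1 + 1 by ring,
        Real.rpow_add hb, Real.rpow_add hb, Real.rpow_one]
    rw [hx2, hsplit]
    linear_combination (α ^ 2 * (a n * ((2 * (n:ℝ) + p) * (2 * (n:ℝ) + p - 1)))
      * ((x ^ α / 2) ^ (2 * (n:ℝ) + (p - 1) - 1) * (x ^ α / 2) * (x ^ α / 2))) * hxx
  have hT2 : α * x ^ α * ∑' n : ℕ, c2 n * (x ^ α / 2) ^ (2 * (n:ℝ) + (p - 1))
      = ∑' n : ℕ, (α ^ 2 * (a n * (2 * (n:ℝ) + p))) * (x ^ α / 2) ^ (2 * (n:ℝ) + p) := by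
    rw [← tsum_mul_left]
    refine tsum_congr fun n => ?_
    simp only [hc2_def]
    have hsplit : (x ^ α / 2) ^ (2 * (n:ℝ) + p)
        = (x ^ α / 2) ^ (2 * (n:ℝ) + (p - 1)) * (x ^ α / 2) := by
      rw [show 2 * (n:ℝ) + p = (2 * (n:ℝ) + (p - 1)) + 1 by ring,
        Real.rpow_add hb, Real.rpow_one]
    rw [hsplit]; ring
  have hT3 : α ^ 2 * (x ^ (2 * α) - p ^ 2) * ∑' n : ℕ, a n * (x ^ α / 2) ^ (2 * (n:ℝ) + p)
      = ∑' n : ℕ, ((α ^ 2 * 4 * a n) * (x ^ α / 2) ^ (2 * (n:ℝ) + (p + 2))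
        - (α ^ 2 * p ^ 2 * a n) * (x ^ α / 2) ^ (2 * (n:ℝ) + p)) := by
    rw [← tsum_mul_left]
    refine tsum_congr fun n => ?_
    have hsplit : (x ^ α / 2) ^ (2 * (n:ℝ) + (p + 2))
        = (x ^ α / 2) ^ (2 * (n:ℝ) + p) * (x ^ α / 2) * (x ^ α / 2) := by
      rw [show 2 * (n:ℝ) + (p + 2) = (2 * (n:ℝ) + p) + 1 + 1 by ring,
        Real.rpow_add hb, Real.rpow_add hb, Real.rpow_one]
    rw [hx2, hsplit]; ring
  rw [hT1, hT2, hT3]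
  -- summability
  have hfour : (4:ℝ) = 2 * 2 := by norm_num
  have hb1 : ∀ n, |α ^ 2 * (a n * ((2 * (n:ℝ) + p) * (2 * (n:ℝ) + p - 1)))|
      ≤ (A * (2 + |p|) * (2 + |p - 1|)) * 4 ^ n / n.factorial := by
    intro n
    have e3 : |2 * (n:ℝ) + p - 1| ≤ (2 + |p - 1|) * 2 ^ n := by
      rw [show 2 * (n:ℝ) + p - 1 = 2 * (n:ℝ) + (p - 1) by ring]; exact lin_le_pow (p - 1) n
    calc |α ^ 2 * (a n * ((2 * (n:ℝ) + p) * (2 * (n:ℝ) + p - 1)))|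
        ≤ 1 * ((A / n.factorial) * (((2 + |p|) * 2 ^ n) * ((2 + |p - 1|) * 2 ^ n))) :=
          prod_bound2 hα2 (prod_bound2 (ha' n) (prod_bound2 (lin_le_pow p n) e3))
      _ = (A * (2 + |p|) * (2 + |p - 1|)) * 4 ^ n / n.factorial := by
          rw [hfour, mul_pow]; ring
  have hb2 : ∀ n, |α ^ 2 * (a n * (2 * (n:ℝ) + p))|
      ≤ (A * (2 + |p|)) * 2 ^ n / n.factorial := by
    intro n
    calc |α ^ 2 * (a n * (2 * (n:ℝ) + p))|
        ≤ 1 * ((A / n.factorial) * ((2 + |p|) * 2 ^ n)) :=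
          prod_bound2 hα2 (prod_bound2 (ha' n) (lin_le_pow p n))
      _ = (A * (2 + |p|)) * 2 ^ n / n.factorial := by ring
  have hb3a : ∀ n, |α ^ 2 * 4 * a n| ≤ (4 * A) * 1 ^ n / n.factorial := by
    intro n
    have h4 : |α ^ 2 * 4| ≤ 4 := by
      rw [abs_of_nonneg (by positivity)]; nlinarith
    calc |α ^ 2 * 4 * a n| ≤ 4 * (A / n.factorial) := prod_bound2 h4 (ha' n)
      _ = (4 * A) * 1 ^ n / n.factorial := by rw [one_pow]; ring
  have hb3b : ∀ n, |α ^ 2 * p ^ 2 * a n| ≤ (p ^ 2 * A) * 1 ^ n / n.factorial := by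
    intro n
    have h4 : |α ^ 2 * p ^ 2| ≤ p ^ 2 := by
      rw [abs_of_nonneg (by positivity)]
      have h5 : α ^ 2 ≤ 1 := by nlinarith
      nlinarith [mul_nonneg (sub_nonneg.2 h5) (sq_nonneg p)]
    calc |α ^ 2 * p ^ 2 * a n| ≤ p ^ 2 * (A / n.factorial) := prod_bound2 h4 (ha' n)
      _ = (p ^ 2 * A) * 1 ^ n / n.factorial := by rw [one_pow]; ring
  have hS1 : Summable (fun n : ℕ => (α ^ 2 * (a n * ((2 * (n:ℝ) + p) * (2 * (n:ℝ) + p - 1))))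
      * (x ^ α / 2) ^ (2 * (n:ℝ) + p)) :=
    summable_coef_rpow (by norm_num : (0:ℝ) ≤ 4) hb1 hb p
  have hS2 : Summable (fun n : ℕ => (α ^ 2 * (a n * (2 * (n:ℝ) + p)))
      * (x ^ α / 2) ^ (2 * (n:ℝ) + p)) :=
    summable_coef_rpow (by norm_num : (0:ℝ) ≤ 2) hb2 hb p
  have hS3a : Summable (fun n : ℕ => (α ^ 2 * 4 * a n) * (x ^ α / 2) ^ (2 * (n:ℝ) + (p + 2))) :=
    summable_coef_rpow (by norm_num : (0:ℝ) ≤ 1) hb3a hb (p + 2)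
  have hS3b : Summable (fun n : ℕ => (α ^ 2 * p ^ 2 * a n) * (x ^ α / 2) ^ (2 * (n:ℝ) + p)) :=
    summable_coef_rpow (by norm_num : (0:ℝ) ≤ 1) hb3b hb p
  have hS3 := hS3a.sub hS3b
  rw [← Summable.tsum_add hS1 hS2, ← Summable.tsum_add (hS1.add hS2) hS3]
  -- reduce to shifted series
  have hperm : ∀ n : ℕ, ((α ^ 2 * (a n * ((2 * (n:ℝ) + p) * (2 * (n:ℝ) + p - 1))))
        * (x ^ α / 2) ^ (2 * (n:ℝ) + p)
      + (α ^ 2 * (a n * (2 * (n:ℝ) + p))) * (x ^ α / 2) ^ (2 * (n:ℝ) + p))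
      + ((α ^ 2 * 4 * a n) * (x ^ α / 2) ^ (2 * (n:ℝ) + (p + 2))
        - (α ^ 2 * p ^ 2 * a n) * (x ^ α / 2) ^ (2 * (n:ℝ) + p))
      = (4 * α ^ 2) * ((((n:ℝ) * ((n:ℝ) + p)) * a n) * (x ^ α / 2) ^ (2 * (n:ℝ) + p)
        + a n * (x ^ α / 2) ^ (2 * (n:ℝ) + (p + 2))) := by
    intro n; ring
  rw [tsum_congr hperm, tsum_mul_left]
  have hPb : ∀ n : ℕ, |((n:ℝ) * ((n:ℝ) + p)) * a n| ≤ ((1 + p) * A) * 4 ^ n / n.factorial := by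
    intro n
    have hn : |(n:ℝ)| ≤ 2 ^ n := by
      rw [abs_of_nonneg (Nat.cast_nonneg n)]
      exact_mod_cast (Nat.lt_two_pow_self (n := n)).le
    have hnp : |(n:ℝ) + p| ≤ (1 + p) * 2 ^ n := by
      have h1 : (n:ℝ) ≤ 2 ^ n := by exact_mod_cast (Nat.lt_two_pow_self (n := n)).le
      have h2 : (1:ℝ) ≤ 2 ^ n := by exact_mod_cast Nat.one_le_two_pow
      rw [abs_of_nonneg (by positivity)]
      nlinarith
    calc |((n:ℝ) * ((n:ℝ) + p)) * a n|
        ≤ (2 ^ n * ((1 + p) * 2 ^ n)) * (A / n.factorial) :=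
          prod_bound2 (prod_bound2 hn hnp) (ha' n)
      _ = ((1 + p) * A) * 4 ^ n / n.factorial := by rw [hfour, mul_pow]; ring
  have hP : Summable (fun n : ℕ => (((n:ℝ) * ((n:ℝ) + p)) * a n)
      * (x ^ α / 2) ^ (2 * (n:ℝ) + p)) :=
    summable_coef_rpow (by norm_num : (0:ℝ) ≤ 4) hPb hb p
  have hQ : Summable (fun n : ℕ => a n * (x ^ α / 2) ^ (2 * (n:ℝ) + (p + 2))) :=
    summable_coef_rpow (by norm_num : (0:ℝ) ≤ 1) ha hb (p + 2)
  rw [Summable.tsum_add hP hQ]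
  have hshift : (∑' n : ℕ, (((n:ℝ) * ((n:ℝ) + p)) * a n) * (x ^ α / 2) ^ (2 * (n:ℝ) + p))
      = - ∑' n : ℕ, a n * (x ^ α / 2) ^ (2 * (n:ℝ) + (p + 2)) := by
    rw [Summable.tsum_eq_zero_add hP]
    have h0 : (((0:ℕ):ℝ) * (((0:ℕ):ℝ) + p)) * a 0 * (x ^ α / 2) ^ (2 * ((0:ℕ):ℝ) + p) = 0 := by
      norm_num
    rw [h0, zero_add, ← tsum_neg]
    refine tsum_congr fun n => ?_
    have hcast : ((n + 1 : ℕ) : ℝ) = (n:ℝ) + 1 := by push_cast; ring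
    have hexp : (x ^ α / 2) ^ (2 * (((n + 1 : ℕ)):ℝ) + p)
        = (x ^ α / 2) ^ (2 * (n:ℝ) + (p + 2)) := by
      rw [hcast]; congr 1; ring
    rw [hexp, hcast, ha_def]
    linear_combination ((x ^ α / 2) ^ (2 * (n:ℝ) + (p + 2))) * aCoef_rec p hp n
  rw [hshift]
  ring
end
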